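/- Define g_t(y) = (2/√(2πt)) · exp(−y²/(2t)) for t > 0 and y ∈ ℝ. Then for all reals 0 < t_1 < t_2, y_1 ≥ 0, y_2 ≥ 0 and z ≤ y_1, one has g_{t_2−t_1}(y_2 − z) ≤ √(t_2/(t_2−t_1)) · g_{t_2}(y_2) · exp( y_1 y_2 / (t_2−t_1) ). -/

import Mathlib

/-- `g t y = (2/√(2πt)) exp(−y²/(2t))`, the density of the running maximum of a standard
Brownian motion at time `t` (for `y ≥ 0`). -/
noncomputable def g (t y : ℝ) : ℝ :=
  (2 / Real.sqrt (2 * Real.pi * t)) * Real.exp (-(y ^ 2) / (2 * t))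

/-- For all reals `0 < t₁ < t₂`, `y₁ ≥ 0`, `y₂ ≥ 0` and `z ≤ y₁`,
`g (t₂−t₁) (y₂−z) ≤ √(t₂/(t₂−t₁)) · g t₂ y₂ · exp(y₁ y₂/(t₂−t₁))`. -/
theorem statement17 (t₁ t₂ y₁ y₂ z : ℝ) (ht₁ : 0 < t₁) (ht : t₁ < t₂)
    (hy₁ : 0 ≤ y₁) (hy₂ : 0 ≤ y₂) (hz : z ≤ y₁) :
    g (t₂ - t₁) (y₂ - z)
      ≤ Real.sqrt (t₂ / (t₂ - t₁)) * g t₂ y₂ * Real.exp (y₁ * y₂ / (t₂ - t₁)) := by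
  have hs0 : 0 < t₂ - t₁ := sub_pos.mpr ht
  have ht₂ : 0 < t₂ := ht₁.trans ht
  have hpi : 0 < 2 * Real.pi := by positivity
  unfold g
  have hpref : Real.sqrt (t₂ / (t₂ - t₁)) * (2 / Real.sqrt (2 * Real.pi * t₂))
      = 2 / Real.sqrt (2 * Real.pi * (t₂ - t₁)) := by
    rw [Real.sqrt_div ht₂.le, Real.sqrt_mul hpi.le, Real.sqrt_mul hpi.le]
    have h1 : 0 < Real.sqrt (2 * Real.pi) := Real.sqrt_pos.mpr hpi
    have h2 : 0 < Real.sqrt t₂ := Real.sqrt_pos.mpr ht₂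
    have h3 : 0 < Real.sqrt (t₂ - t₁) := Real.sqrt_pos.mpr hs0
    field_simp
  have hexp : -((y₂ - z) ^ 2) / (2 * (t₂ - t₁))
      ≤ -(y₂ ^ 2) / (2 * t₂) + y₁ * y₂ / (t₂ - t₁) := by
    rw [div_add_div _ _ (by positivity) hs0.ne', div_le_div_iff₀ (by positivity) (by positivity)]
    nlinarith [mul_nonneg hs0.le (mul_nonneg ht₂.le (sq_nonneg z)),
      mul_nonneg hs0.le (mul_nonneg (mul_nonneg ht₂.le (sub_nonneg.mpr hz)) hy₂),
      mul_nonneg hs0.le (mul_nonneg ht₁.le (sq_nonneg y₂))]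
  calc (2 / Real.sqrt (2 * Real.pi * (t₂ - t₁))) * Real.exp (-((y₂ - z) ^ 2) / (2 * (t₂ - t₁)))
      ≤ (2 / Real.sqrt (2 * Real.pi * (t₂ - t₁))) *
        Real.exp (-(y₂ ^ 2) / (2 * t₂) + y₁ * y₂ / (t₂ - t₁)) := by
        gcongr
    _ = Real.sqrt (t₂ / (t₂ - t₁)) * ((2 / Real.sqrt (2 * Real.pi * t₂)) *
        Real.exp (-(y₂ ^ 2) / (2 * t₂))) * Real.exp (y₁ * y₂ / (t₂ - t₁)) := by
        rw [Real.exp_add]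
        rw [show Real.sqrt (t₂ / (t₂ - t₁)) * ((2 / Real.sqrt (2 * Real.pi * t₂)) *
          Real.exp (-(y₂ ^ 2) / (2 * t₂))) * Real.exp (y₁ * y₂ / (t₂ - t₁))
          = Real.sqrt (t₂ / (t₂ - t₁)) * (2 / Real.sqrt (2 * Real.pi * t₂)) *
            (Real.exp (-(y₂ ^ 2) / (2 * t₂)) * Real.exp (y₁ * y₂ / (t₂ - t₁))) by ring, hpref]
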